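/- Let {x_n} be a sequence of nonzero vectors in H with ‖x_n‖ → 0 as n → ∞. Suppose there exists an infinite-dimensional closed subspace M of H such that {P_M x_n} satisfies a lower frame condition for M (∑_n |⟨x, P_M x_n⟩|² ≥ A‖x‖² for all x ∈ M, some A > 0). Then {x_n/‖x_n‖} is not a Bessel sequence in H. -/

import Mathlib

open scoped ComplexInnerProductSpace ENNReal
open Filter Topology

noncomputable section

variable {E : Type*} [NormedAddCommGroup E] [InnerProductSpace ℂ E]

/-- `y` is a Bessel sequence with Bessel bound `B`:
`∑ᵢ |⟪z, yᵢ⟫|² ≤ B‖z‖²` for all `z` (sum taken in `ℝ≥0∞` so that divergence is handled). -/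
def BesselWith {ι : Type*} (y : ι → E) (B : ℝ) : Prop :=
  ∀ z : E, ∑' i, ENNReal.ofReal (‖⟪z, y i⟫‖ ^ 2) ≤ ENNReal.ofReal (B * ‖z‖ ^ 2)

/-- `y` satisfies the lower frame condition with bound `A`:
`A‖z‖² ≤ ∑ᵢ |⟪z, yᵢ⟫|²` for all `z`. -/
def LowerFrameWith {ι : Type*} (y : ι → E) (A : ℝ) : Prop :=
  ∀ z : E, ENNReal.ofReal (A * ‖z‖ ^ 2) ≤ ∑' i, ENNReal.ofReal (‖⟪z, y i⟫‖ ^ 2)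

/-- `y` is a frame with frame bounds `A ≤ B`. -/
def FrameWith {ι : Type*} (y : ι → E) (A B : ℝ) : Prop :=
  0 < A ∧ A ≤ B ∧ LowerFrameWith y A ∧ BesselWith y B

/-- The normalized sequence `yᵢ/‖yᵢ‖`. -/
def normalizeSeq {ι : Type*} (y : ι → E) : ι → E := fun i => (‖y i‖ : ℂ)⁻¹ • y i

/-- If `‖x_n‖ → 0` and the orthogonal projections of the `x_n` onto some
infinite-dimensional closed subspace `M` satisfy a lower frame condition for `M`, then the
normalized sequence is not a Bessel sequence in `H`. -/
theorem stmt9 {H : Type*} [NormedAddCommGroup H] [InnerProductSpace ℂ H] [CompleteSpace H]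
    (x : ℕ → H) (hx : ∀ n, x n ≠ 0)
    (h0 : Tendsto (fun n => ‖x n‖) atTop (𝓝 0))
    (M : Submodule ℂ H) [CompleteSpace M] (hM : ¬ FiniteDimensional ℂ M)
    (hA : ∃ A > (0 : ℝ),
      LowerFrameWith (fun n => (M.orthogonalProjectionOnto (x n) : M)) A) :
    ¬ ∃ B : ℝ, BesselWith (normalizeSeq x) B := by
  rintro ⟨B, hBB⟩
  obtain ⟨A, hApos, hLF⟩ := hA
  set B' : ℝ := max B 1 with hB'def
  have hB'pos : (0:ℝ) < B' := lt_of_lt_of_le one_pos (le_max_right _ _)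
  have hBes : BesselWith (normalizeSeq x) B' := fun z =>
    (hBB z).trans (ENNReal.ofReal_le_ofReal
      (mul_le_mul_of_nonneg_right (le_max_left B 1) (sq_nonneg _)))
  set c : ℝ := A / (2 * B') with hc
  have hcpos : 0 < c := div_pos hApos (by linarith)
  obtain ⟨N, hN⟩ := Metric.tendsto_atTop.mp h0 (Real.sqrt c) (Real.sqrt_pos.mpr hcpos)
  have hsmall : ∀ n, N ≤ n → ‖x n‖ ^ 2 ≤ c := by
    intro n hn
    have h1 : ‖x n‖ < Real.sqrt c := by
      have := hN n hn
      rwa [Real.dist_eq, sub_zero, abs_of_nonneg (norm_nonneg _)] at this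
    nlinarith [Real.sq_sqrt hcpos.le, norm_nonneg (x n), Real.sqrt_nonneg c]
  set P : ℕ → M := fun n => M.orthogonalProjectionOnto (x n) with hP
  set T : Submodule ℂ M := Submodule.span ℂ (P '' Set.Iio N) with hT
  have hTfin : FiniteDimensional ℂ T :=
    FiniteDimensional.span_of_finite ℂ ((Set.finite_Iio N).image P)
  have hTne : Tᗮ ≠ ⊥ := by
    intro h
    have htop : T = ⊤ := Submodule.orthogonal_eq_bot_iff.mp h
    rw [htop] at hTfin
    exact hM (Module.Finite.equiv (Submodule.topEquiv))
  obtain ⟨w, hwT, hw0⟩ := (Submodule.ne_bot_iff _).mp hTne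
  set z : H := (w : H) with hz
  have hzw : ‖z‖ = ‖w‖ := rfl
  have hz0 : z ≠ 0 := fun h => hw0 (Subtype.coe_injective h)
  -- inner with x n equals inner with projection
  have hinner : ∀ n, ⟪z, x n⟫ = ⟪w, P n⟫ := by
    intro n
    have h1 : ⟪z, x n - (P n : H)⟫ = 0 :=
      Submodule.inner_right_of_mem_orthogonal w.2
        (Submodule.sub_starProjection_mem_orthogonal (x n))
    rw [inner_sub_right, sub_eq_zero] at h1
    rw [h1, Submodule.coe_inner]
  have hzeroF : ∀ n, n < N → ⟪w, P n⟫ = 0 := by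
    intro n hn
    exact Submodule.inner_left_of_mem_orthogonal
      (Submodule.subset_span (Set.mem_image_of_mem P (Set.mem_Iio.mpr hn))) hwT
  have hnorm : ∀ n, ‖⟪z, x n⟫‖ = ‖x n‖ * ‖⟪z, normalizeSeq x n⟫‖ := by
    intro n
    have hxn : (‖x n‖ : ℂ) ≠ 0 := by
      simpa using norm_ne_zero_iff.mpr (hx n)
    have : ⟪z, normalizeSeq x n⟫ = (‖x n‖ : ℂ)⁻¹ * ⟪z, x n⟫ := by
      simp [normalizeSeq, inner_smul_right]
    rw [this, norm_mul, norm_inv, ← mul_assoc]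
    simp [mul_inv_cancel₀ (norm_ne_zero_iff.mpr (hx n))]
  -- pointwise bound
  have hpt : ∀ n, ENNReal.ofReal (‖⟪w, P n⟫‖ ^ 2) ≤
      ENNReal.ofReal c * ENNReal.ofReal (‖⟪z, normalizeSeq x n⟫‖ ^ 2) := by
    intro n
    rcases lt_or_ge n N with hn | hn
    · simp [hzeroF n hn]
    · rw [← hinner n, ← ENNReal.ofReal_mul hcpos.le]
      apply ENNReal.ofReal_le_ofReal
      rw [hnorm n, mul_pow]
      exact mul_le_mul_of_nonneg_right (hsmall n hn) (sq_nonneg _)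
  have key : ENNReal.ofReal (A * ‖w‖ ^ 2) ≤ ENNReal.ofReal ((A / 2) * ‖w‖ ^ 2) := by
    calc ENNReal.ofReal (A * ‖w‖ ^ 2)
        ≤ ∑' n, ENNReal.ofReal (‖⟪w, P n⟫‖ ^ 2) := hLF w
      _ ≤ ∑' n, ENNReal.ofReal c * ENNReal.ofReal (‖⟪z, normalizeSeq x n⟫‖ ^ 2) :=
          ENNReal.tsum_le_tsum hpt
      _ = ENNReal.ofReal c * ∑' n, ENNReal.ofReal (‖⟪z, normalizeSeq x n⟫‖ ^ 2) :=
          ENNReal.tsum_mul_left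
      _ ≤ ENNReal.ofReal c * ENNReal.ofReal (B' * ‖z‖ ^ 2) := by
          exact mul_le_mul_right (hBes z) _
      _ = ENNReal.ofReal (c * (B' * ‖z‖ ^ 2)) := (ENNReal.ofReal_mul hcpos.le).symm
      _ = ENNReal.ofReal ((A / 2) * ‖w‖ ^ 2) := by
          rw [hzw]
          congr 1
          field_simp [hc]
          rw [hc]; field_simp
  have hwpos : 0 < ‖w‖ := norm_pos_iff.mpr hw0
  have := (ENNReal.ofReal_le_ofReal_iff (by positivity)).mp key
  nlinarith [sq_nonneg ‖w‖, mul_pos hwpos hwpos]
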